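/- arXiv:1407.0570 — 7 statements merged into one kernel-verified Lean document; each statement's English description precedes it below -/
import Mathlib

section
/- The number of permutations of length n avoiding the pattern 123 equals the n-th Catalan number binomial(2n, n)/(n+1). -/
/-- A pattern `π` (of length `k`) is contained in `σ` (of length `n`) if there is a
strictly increasing choice of positions whose values are ordered like `π`. -/
def PattContains {n k : ℕ} (σ : Fin n → Fin n) (π : Fin k → Fin k) : Prop :=
  ∃ f : Fin k → Fin n, StrictMono f ∧ ∀ i j : Fin k, π i < π j ↔ σ (f i) < σ (f j)

/-- `σ` avoids the pattern `π`. -/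
def PattAvoids {n k : ℕ} (σ : Fin n → Fin n) (π : Fin k → Fin k) : Prop :=
  ¬ PattContains σ π

namespace Av123

/-- containment of 123 is just an increasing triple -/
lemma contains_iff {n : ℕ} (σ : Fin n → Fin n) :
    PattContains σ ![0,1,2] ↔
      ∃ a b c : Fin n, a < b ∧ b < c ∧ σ a < σ b ∧ σ b < σ c := by
  constructor
  · rintro ⟨f, hf, hp⟩
    exact ⟨f 0, f 1, f 2, hf (by decide), hf (by decide),
      (hp 0 1).1 (by decide), (hp 1 2).1 (by decide)⟩
  · rintro ⟨a, b, c, hab, hbc, h1, h2⟩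
    refine ⟨![a,b,c], ?_, ?_⟩
    · intro i j hij
      fin_cases i <;> fin_cases j <;>
        simp_all [Matrix.cons_val_zero, Matrix.cons_val_one] <;> omega
    · intro i j
      have h3 : σ a < σ c := h1.trans h2
      fin_cases i <;> fin_cases j <;>
        simp [Matrix.cons_val_zero, Matrix.cons_val_one] <;>
        simp only [Fin.lt_def, Fin.le_def] at h1 h2 h3 ⊢ <;> omega


open Finset


/-- `r`-th largest element of a finset of naturals (0-indexed). -/
noncomputable def dEnum (s : Finset ℕ) (r : ℕ) : ℕ :=
  if h : r < s.card then s.orderEmbOfFin rfl (Fin.rev ⟨r, h⟩) else 0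

lemma dEnum_mem {s : Finset ℕ} {r : ℕ} (h : r < s.card) : dEnum s r ∈ s := by
  rw [dEnum, dif_pos h]; exact Finset.orderEmbOfFin_mem s rfl _

lemma dEnum_strictAnti {s : Finset ℕ} {r q : ℕ} (hrq : r < q) (h : q < s.card) :
    dEnum s q < dEnum s r := by
  rw [dEnum, dEnum, dif_pos h, dif_pos (hrq.trans h)]
  exact (Finset.orderEmbOfFin s rfl).strictMono
    (by simp [Fin.lt_def, Fin.rev]; omega)

lemma dEnum_surj {s : Finset ℕ} {x : ℕ} (hx : x ∈ s) :
    ∃ r < s.card, dEnum s r = x := by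
  have := Finset.range_orderEmbOfFin s (rfl : s.card = s.card)
  have hx' : x ∈ Set.range (s.orderEmbOfFin rfl) := by rw [this]; exact hx
  obtain ⟨i, hi⟩ := hx'
  refine ⟨i.rev, (Fin.rev i).isLt, ?_⟩
  rw [dEnum, dif_pos (i.rev).isLt]
  have : Fin.rev ⟨(i.rev : ℕ), (i.rev).isLt⟩ = i := by
    apply Fin.ext; simp [Fin.rev]; omega
  rw [this, hi]

lemma dEnum_injOn {s : Finset ℕ} {r q : ℕ} (hr : r < s.card) (hq : q < s.card)
    (h : dEnum s r = dEnum s q) : r = q := by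
  rcases lt_trichotomy r q with h'|h'|h'
  · exact absurd h (dEnum_strictAnti h' hq).ne'
  · exact h'
  · exact absurd h (dEnum_strictAnti h' hr).ne

/-- if at least `r+1` elements of `s` exceed `a`, then the `r`-th largest exceeds `a`. -/
lemma lt_dEnum {s : Finset ℕ} {a r : ℕ} (hr : r < s.card)
    (hcount : r + 1 ≤ (s.filter (fun x => a < x)).card) : a < dEnum s r := by
  by_contra hle
  push_neg at hle
  -- every element > a is among the r largest
  have hsub : s.filter (fun x => a < x) ⊆
      (Finset.Ioi (Fin.rev ⟨r, hr⟩ : Fin s.card)).image (s.orderEmbOfFin rfl) := by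
    intro x hx
    obtain ⟨hxs, hax⟩ := Finset.mem_filter.1 hx
    have hx' : x ∈ Set.range (s.orderEmbOfFin rfl) := by
      rw [Finset.range_orderEmbOfFin]; exact hxs
    obtain ⟨i, hi⟩ := hx'
    have : (Fin.rev ⟨r, hr⟩ : Fin s.card) < i := by
      by_contra hcon
      push_neg at hcon
      have := (s.orderEmbOfFin rfl).monotone hcon
      rw [hi] at this
      rw [dEnum, dif_pos hr] at hle
      omega
    exact Finset.mem_image.2 ⟨i, Finset.mem_Ioi.2 this, hi⟩
  have hc := (Finset.card_le_card hsub).trans Finset.card_image_le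
  rw [Fin.card_Ioi] at hc
  simp [Fin.rev] at hc
  omega




variable {n : ℕ}

/-- strict left-to-right minimum position -/
def LowP (u : Fin n → ℕ) (i : Fin n) : Prop := ∀ j, j < i → u i < u j

instance (u : Fin n → ℕ) : DecidablePred (LowP u) := fun _ => by
  unfold LowP; infer_instance

/-- rank of `i` inside finset `s` -/
def rk (s : Finset (Fin n)) (i : Fin n) : ℕ := (s.filter (· < i)).card

lemma rk_lt_card {s : Finset (Fin n)} {i : Fin n} (hi : i ∈ s) : rk s i < s.card := by
  apply Finset.card_lt_card
  refine ⟨Finset.filter_subset _ _, fun hsub => ?_⟩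
  have := hsub hi
  simp at this

lemma rk_lt_rk {s : Finset (Fin n)} {i j : Fin n} (hi : i ∈ s) (hij : i < j) :
    rk s i < rk s j := by
  apply Finset.card_lt_card
  constructor
  · intro x hx
    simp only [Finset.mem_filter] at hx ⊢
    exact ⟨hx.1, hx.2.trans hij⟩
  · intro hsub
    have := hsub (by simp [Finset.mem_filter, hi, hij] : i ∈ s.filter (· < j))
    simp at this

def dropF (u : Fin n → ℕ) : Finset (Fin n) := univ.filter (LowP u)
def ndF (u : Fin n → ℕ) : Finset (Fin n) := univ.filter (fun i => ¬ LowP u i)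
def Vs (u : Fin n → ℕ) : Finset ℕ := univ.image u
def Ws (u : Fin n → ℕ) : Finset ℕ := (range n) \ Vs u

/-- the running minimum -/
def rmin (u : Fin n → ℕ) (i : Fin n) : ℕ :=
  (Finset.Iic i).inf' ⟨i, Finset.mem_Iic.2 le_rfl⟩ u

lemma rmin_le {u : Fin n → ℕ} {i j : Fin n} (h : j ≤ i) : rmin u i ≤ u j :=
  Finset.inf'_le _ (Finset.mem_Iic.2 h)

lemma rmin_exists (u : Fin n → ℕ) (i : Fin n) : ∃ j, j ≤ i ∧ rmin u i = u j := by
  obtain ⟨j, hj, he⟩ := Finset.exists_mem_eq_inf' (⟨i, Finset.mem_Iic.2 le_rfl⟩) u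
  exact ⟨j, Finset.mem_Iic.1 hj, he⟩

lemma le_rmin {u : Fin n → ℕ} {i : Fin n} {a : ℕ} (h : ∀ j, j ≤ i → a ≤ u j) :
    a ≤ rmin u i :=
  Finset.le_inf' _ _ fun j hj => h j (Finset.mem_Iic.1 hj)

lemma rmin_antitone (u : Fin n → ℕ) : Antitone (rmin u) := by
  intro i j hij
  exact le_rmin fun p hp => rmin_le (hp.trans hij)

lemma rmin_lt_n {u : Fin n → ℕ} (hlt : ∀ i, u i < n) (i : Fin n) : rmin u i < n := by
  obtain ⟨j, _, he⟩ := rmin_exists u i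
  rw [he]; exact hlt j

lemma rmin_staircase {u : Fin n → ℕ} (hinj : Function.Injective u)
    (hlt : ∀ i, u i < n) (i : Fin n) : rmin u i + (i : ℕ) + 1 ≤ n := by
  have himg : (Finset.Iic i).image u ⊆ Finset.Ico (rmin u i) n := by
    intro x hx
    obtain ⟨j, hj, rfl⟩ := Finset.mem_image.1 hx
    exact Finset.mem_Ico.2 ⟨rmin_le (Finset.mem_Iic.1 hj), hlt j⟩
  have hcard := Finset.card_le_card himg
  rw [Finset.card_image_of_injective _ hinj, Fin.card_Iic, Nat.card_Ico] at hcard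
  have := rmin_lt_n hlt i
  omega

section USide
variable {u : Fin n → ℕ} (hinj : Function.Injective u)

include hinj

lemma low_iff_eq_rmin {i : Fin n} : LowP u i ↔ u i = rmin u i := by
  constructor
  · intro hl
    refine le_antisymm ?_ (rmin_le le_rfl)
    exact le_rmin fun j hj => by
      rcases eq_or_lt_of_le hj with rfl | h
      · exact le_rfl
      · exact (hl j h).le
  · intro he j hj
    have h1 : rmin u i ≤ u j := rmin_le hj.le
    rcases eq_or_lt_of_le h1 with h2 | h2
    · rw [← he] at h2
      exact absurd (hinj h2.symm) (ne_of_lt hj)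
    · omega

omit hinj in
/-- the running min is attained at a Low position with the same value -/
lemma rmin_attained (i : Fin n) : ∃ j, j ≤ i ∧ LowP u j ∧ u j = rmin u i := by
  classical
  set T := (Finset.Iic i).filter (fun j => u j = rmin u i) with hT
  have hTne : T.Nonempty := by
    obtain ⟨j, hj, he⟩ := rmin_exists u i
    exact ⟨j, by simp [hT, Finset.mem_Iic.2 hj, he.symm]⟩
  set j₀ := T.min' hTne with hj₀
  have hj₀T : j₀ ∈ T := T.min'_mem hTne
  simp only [hT, Finset.mem_filter, Finset.mem_Iic] at hj₀T
  refine ⟨j₀, hj₀T.1, ?_, hj₀T.2⟩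
  intro p hp
  have hple : rmin u i ≤ u p := rmin_le (hp.le.trans hj₀T.1)
  rcases eq_or_lt_of_le hple with h2 | h2
  · -- p would also attain the min, contradicting minimality
    have hpT : p ∈ T := by simp [hT, Finset.mem_Iic.2 (hp.le.trans hj₀T.1), h2.symm]
    have := T.min'_le p hpT
    exact absurd (this.trans_lt hp) (lt_irrefl _)
  · rw [hj₀T.2]; exact h2

lemma low_rmin_iff {i : Fin n} : LowP (rmin u) i ↔ LowP u i := by
  constructor
  · intro hl
    rw [low_iff_eq_rmin hinj]
    by_contra hne
    have h1 : rmin u i ≤ u i := rmin_le le_rfl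
    have h2 : rmin u i < u i := lt_of_le_of_ne h1 (Ne.symm hne)
    obtain ⟨p, hpi, he⟩ := rmin_exists u i
    have hpi' : p < i := by
      rcases eq_or_lt_of_le hpi with rfl | h; · omega
      · exact h
    have h3 : rmin u p ≤ u p := rmin_le le_rfl
    have h4 := hl p hpi'
    rw [← he] at h3
    omega
  · intro hl p hp
    have heq : u i = rmin u i := (low_iff_eq_rmin hinj).1 hl
    have h1 : rmin u i ≤ rmin u p := rmin_antitone u hp.le
    rcases eq_or_lt_of_le h1 with h2 | h2
    · obtain ⟨q, hq, hlq, he⟩ := rmin_attained p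
      rw [← h2, ← heq] at he
      have h5 : q < i := hq.trans_lt hp
      rw [hinj he] at h5
      exact absurd h5 (lt_irrefl _)
    · exact h2

end USide

/-- no increasing triple -/
def TFree (u : Fin n → ℕ) : Prop :=
  ∀ a b c : Fin n, a < b → b < c → u a < u b → u b < u c → False

section USide2
variable {u : Fin n → ℕ} (hinj : Function.Injective u)

include hinj

lemma nd_anti (htf : TFree u) {i j : Fin n} (hij : i < j) (hni : ¬ LowP u i) :
    u j < u i := by
  unfold LowP at hni
  push_neg at hni
  obtain ⟨p, hpi, hpu⟩ := hni
  have hpu' : u p < u i := lt_of_le_of_ne hpu (fun he => (ne_of_lt hpi) (hinj he))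
  rcases lt_trichotomy (u j) (u i) with h | h | h
  · exact h
  · exact absurd (hinj h.symm) (ne_of_lt hij)
  · exact absurd (htf p i j hpi hij hpu' h) not_false

lemma Vs_rmin_eq : Vs (rmin u) = (dropF u).image u := by
  ext x
  simp only [Vs, dropF, Finset.mem_image, Finset.mem_filter, Finset.mem_univ, true_and]
  constructor
  · rintro ⟨j, rfl⟩
    obtain ⟨q, hq, hlq, he⟩ := rmin_attained j
    exact ⟨q, hlq, he⟩
  · rintro ⟨q, hlq, rfl⟩
    exact ⟨q, ((low_iff_eq_rmin hinj).1 hlq).symm⟩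

omit hinj in
lemma card_dropF_add_card_ndF : (dropF u).card + (ndF u).card = n := by
  have := Finset.card_filter_add_card_filter_not (p := LowP u)
    (s := (univ : Finset (Fin n)))
  simpa [dropF, ndF, Finset.card_univ] using this

lemma card_Vs_rmin : (Vs (rmin u)).card = (dropF u).card := by
  rw [Vs_rmin_eq hinj, Finset.card_image_of_injective _ hinj]

omit hinj in
lemma Vs_rmin_subset (hlt : ∀ i, u i < n) : Vs (rmin u) ⊆ range n := by
  intro x hx
  simp only [Vs, Finset.mem_image] at hx
  obtain ⟨j, -, rfl⟩ := hx
  exact Finset.mem_range.2 (rmin_lt_n hlt j)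

lemma image_nd_eq_Ws (hlt : ∀ i, u i < n) (htf : TFree u) :
    (ndF u).image u = Ws (rmin u) := by
  apply Finset.eq_of_subset_of_card_le
  · intro x hx
    simp only [ndF, Finset.mem_image, Finset.mem_filter, Finset.mem_univ, true_and] at hx
    obtain ⟨j, hj, rfl⟩ := hx
    simp only [Ws, Finset.mem_sdiff, Finset.mem_range]
    refine ⟨hlt j, fun hmem => ?_⟩
    rw [Vs_rmin_eq hinj] at hmem
    simp only [dropF, Finset.mem_image, Finset.mem_filter, Finset.mem_univ, true_and] at hmem
    obtain ⟨q, hlq, he⟩ := hmem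
    exact hj (hinj he ▸ hlq)
  · simp only [Ws]
    rw [Finset.card_sdiff_of_subset (Vs_rmin_subset hlt), Finset.card_range,
      card_Vs_rmin hinj, Finset.card_image_of_injective _ hinj]
    have := card_dropF_add_card_ndF (u := u)
    omega

end USide2

lemma strictAnti_unique {t : ℕ} (s : Finset ℕ) (hs : s.card = t) {f g : Fin t → ℕ}
    (hf : StrictAnti f) (hg : StrictAnti g)
    (hfs : ∀ x, f x ∈ s) (hgs : ∀ x, g x ∈ s) : f = g := by
  have hf' : StrictMono (f ∘ Fin.rev) := fun x y hxy => hf (Fin.rev_lt_rev.2 hxy)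
  have hg' : StrictMono (g ∘ Fin.rev) := fun x y hxy => hg (Fin.rev_lt_rev.2 hxy)
  have e1 := Finset.orderEmbOfFin_unique hs (fun x => hfs _) hf'
  have e2 := Finset.orderEmbOfFin_unique hs (fun x => hgs _) hg'
  funext x
  have := congrFun (e1.trans e2.symm) x.rev
  simpa [Function.comp, Fin.rev_rev] using this

theorem rmin_determines {u v : Fin n → ℕ}
    (hinju : Function.Injective u) (hinjv : Function.Injective v)
    (hltu : ∀ i, u i < n) (hltv : ∀ i, v i < n)
    (htfu : TFree u) (htfv : TFree v)
    (h : rmin u = rmin v) : u = v := by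
  have hndeq : ndF u = ndF v := by
    unfold ndF
    apply Finset.filter_congr
    intro i _
    rw [← low_rmin_iff hinju, ← low_rmin_iff hinjv, h]
  set N := ndF u with hN
  set t := N.card with ht
  set e : Fin t ≃o {x // x ∈ N} := N.orderIsoOfFin rfl with he
  have hmemN : ∀ x : Fin t, (e x : Fin n) ∈ N := fun x => (e x).2
  have hndu : ∀ i, i ∈ N → ¬ LowP u i := by
    intro i hi; simpa [hN, ndF] using hi
  have hndv : ∀ i, i ∈ N → ¬ LowP v i := by
    intro i hi; rw [hndeq] at hi; simpa [ndF] using hi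
  have hanti_u : StrictAnti (fun x : Fin t => u (e x)) := by
    intro x y hxy
    exact nd_anti hinju htfu (by exact_mod_cast (e.strictMono hxy)) (hndu _ (hmemN x))
  have hanti_v : StrictAnti (fun x : Fin t => v (e x)) := by
    intro x y hxy
    exact nd_anti hinjv htfv (by exact_mod_cast (e.strictMono hxy)) (hndv _ (hmemN x))
  have hWcard : (Ws (rmin u)).card = t := by
    have h1 := card_dropF_add_card_ndF (u := u)
    simp only [Ws]
    rw [Finset.card_sdiff_of_subset (Vs_rmin_subset hltu), Finset.card_range,
      card_Vs_rmin hinju, ht, hN]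
    omega
  have hmemWu : ∀ x : Fin t, u (e x) ∈ Ws (rmin u) := by
    intro x
    rw [← image_nd_eq_Ws hinju hltu htfu]
    exact Finset.mem_image_of_mem u (hmemN x)
  have hmemWv : ∀ x : Fin t, v (e x) ∈ Ws (rmin u) := by
    intro x
    rw [h, ← image_nd_eq_Ws hinjv hltv htfv, ← hndeq]
    exact Finset.mem_image_of_mem v (hmemN x)
  have heq := strictAnti_unique (Ws (rmin u)) hWcard hanti_u hanti_v hmemWu hmemWv
  funext i
  by_cases hl : LowP u i
  · have hlv : LowP v i := (low_rmin_iff hinjv).1 (h ▸ (low_rmin_iff hinju).2 hl)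
    rw [(low_iff_eq_rmin hinju).1 hl, (low_iff_eq_rmin hinjv).1 hlv, h]
  · have hiN : i ∈ N := by simp [hN, ndF, hl]
    obtain ⟨x, hx⟩ := e.surjective ⟨i, hiN⟩
    have h1 := congrFun heq x
    simpa [hx] using h1



variable {n : ℕ}

section Construct
variable {m : Fin n → ℕ} (hm : Antitone m) (hst : ∀ i : Fin n, m i + (i : ℕ) + 1 ≤ n)

include hm in
lemma lastLow (i : Fin n) : ∃ j, j ≤ i ∧ LowP m j ∧ m j = m i := by
  classical
  set T := (Finset.Iic i).filter (fun j => m j = m i) with hT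
  have hTne : T.Nonempty := ⟨i, by simp [hT]⟩
  set j₀ := T.min' hTne with hj₀
  have hj₀T : j₀ ∈ T := T.min'_mem hTne
  simp only [hT, Finset.mem_filter, Finset.mem_Iic] at hj₀T
  refine ⟨j₀, hj₀T.1, ?_, hj₀T.2⟩
  intro p hp
  have h1 : m j₀ ≤ m p := hm hp.le
  rcases eq_or_lt_of_le h1 with h2 | h2
  · have hpT : p ∈ T := by
      simp only [hT, Finset.mem_filter, Finset.mem_Iic]
      exact ⟨hp.le.trans hj₀T.1, h2 ▸ hj₀T.2⟩
    exact absurd ((T.min'_le p hpT).trans_lt hp) (lt_irrefl _)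
  · exact h2

include hst in
lemma m_lt_n (i : Fin n) : m i < n := by have := hst i; omega

include hm in
lemma m_injOn_drop : ∀ i ∈ dropF m, ∀ j ∈ dropF m, m i = m j → i = j := by
  intro i hi j hj hij
  simp only [dropF, Finset.mem_filter, Finset.mem_univ, true_and] at hi hj
  by_contra hne
  rcases lt_trichotomy i j with h | h | h
  · exact absurd hij (hj i h).ne'
  · exact hne h
  · exact absurd hij (hi j h).ne

include hm in
lemma Vs_m_eq : Vs m = (dropF m).image m := by
  ext x
  simp only [Vs, dropF, Finset.mem_image, Finset.mem_filter, Finset.mem_univ, true_and]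
  constructor
  · rintro ⟨j, rfl⟩
    obtain ⟨q, hq, hlq, he⟩ := lastLow hm j
    exact ⟨q, hlq, he⟩
  · rintro ⟨q, _, rfl⟩
    exact ⟨q, rfl⟩

include hm in
lemma card_Vs_m : (Vs m).card = (dropF m).card := by
  rw [Vs_m_eq hm, Finset.card_image_of_injOn (fun a ha b hb h => m_injOn_drop hm a ha b hb h)]

include hst in
lemma Vs_m_subset : Vs m ⊆ range n := by
  intro x hx
  simp only [Vs, Finset.mem_image] at hx
  obtain ⟨j, -, rfl⟩ := hx
  exact Finset.mem_range.2 (m_lt_n hst j)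

include hm hst in
lemma card_Ws_m : (Ws m).card = (ndF m).card := by
  have h1 := card_dropF_add_card_ndF (u := m)
  simp only [Ws]
  rw [Finset.card_sdiff_of_subset (Vs_m_subset hst), Finset.card_range, card_Vs_m hm]
  omega

end Construct

noncomputable def gfun (m : Fin n → ℕ) : Fin n → ℕ := fun i =>
  if LowP m i then m i else dEnum (Ws m) (rk (ndF m) i)

section Construct2
variable {m : Fin n → ℕ} (hm : Antitone m) (hst : ∀ i : Fin n, m i + (i : ℕ) + 1 ≤ n)

lemma gfun_low {i : Fin n} (h : LowP m i) : gfun m i = m i := if_pos h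

lemma gfun_nd {i : Fin n} (h : ¬ LowP m i) : gfun m i = dEnum (Ws m) (rk (ndF m) i) :=
  if_neg h

lemma mem_ndF {i : Fin n} : i ∈ ndF m ↔ ¬ LowP m i := by simp [ndF]

include hm hst in
lemma rk_nd_lt {i : Fin n} (h : ¬ LowP m i) : rk (ndF m) i < (Ws m).card := by
  rw [card_Ws_m hm hst]; exact rk_lt_card (mem_ndF.2 h)

include hm hst in
lemma gfun_nd_mem {i : Fin n} (h : ¬ LowP m i) : gfun m i ∈ Ws m := by
  rw [gfun_nd h]; exact dEnum_mem (rk_nd_lt hm hst h)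

include hm hst in
lemma gfun_lt_n (i : Fin n) : gfun m i < n := by
  by_cases h : LowP m i
  · rw [gfun_low h]; exact m_lt_n hst i
  · have := gfun_nd_mem hm hst h
    simp only [Ws, Finset.mem_sdiff, Finset.mem_range] at this
    exact this.1

lemma gfun_anti_low {i j : Fin n} (hij : i < j) (hli : LowP m i) (hlj : LowP m j) :
    gfun m j < gfun m i := by
  rw [gfun_low hli, gfun_low hlj]; exact hlj i hij

include hm hst in
lemma gfun_anti_nd {i j : Fin n} (hij : i < j) (hni : ¬ LowP m i) (hnj : ¬ LowP m j) :
    gfun m j < gfun m i := by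
  rw [gfun_nd hni, gfun_nd hnj]
  exact dEnum_strictAnti (rk_lt_rk (mem_ndF.2 hni) hij) (rk_nd_lt hm hst hnj)

include hm hst in
lemma gfun_ne {i j : Fin n} (hij : i < j) : gfun m i ≠ gfun m j := by
  by_cases hi : LowP m i <;> by_cases hj : LowP m j
  · exact (gfun_anti_low hij hi hj).ne'
  · intro h
    have h1 : gfun m i ∈ Vs m := by rw [gfun_low hi]; exact Finset.mem_image_of_mem m (mem_univ i)
    have h2 := gfun_nd_mem hm hst hj
    rw [← h] at h2
    simp only [Ws, Finset.mem_sdiff] at h2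
    exact h2.2 h1
  · intro h
    have h1 : gfun m j ∈ Vs m := by rw [gfun_low hj]; exact Finset.mem_image_of_mem m (mem_univ j)
    have h2 := gfun_nd_mem hm hst hi
    rw [h] at h2
    simp only [Ws, Finset.mem_sdiff] at h2
    exact h2.2 h1
  · exact (gfun_anti_nd hm hst hij hi hj).ne'

include hm hst in
lemma gfun_inj : Function.Injective (gfun m) := by
  intro i j h
  by_contra hne
  rcases lt_trichotomy i j with h' | h' | h'
  · exact gfun_ne hm hst h' h
  · exact hne h'
  · exact gfun_ne hm hst h' h.symm

include hm hst in
lemma gfun_tf : TFree (gfun m) := by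
  intro a b c hab hbc h1 h2
  have hac := hab.trans hbc
  have h3 := h1.trans h2
  by_cases La : LowP m a <;> by_cases Lb : LowP m b <;> by_cases Lc : LowP m c
  · exact absurd h1 (gfun_anti_low hab La Lb).asymm
  · exact absurd h1 (gfun_anti_low hab La Lb).asymm
  · exact absurd h3 (gfun_anti_low hac La Lc).asymm
  · exact absurd h2 (gfun_anti_nd hm hst hbc Lb Lc).asymm
  · exact absurd h2 (gfun_anti_low hbc Lb Lc).asymm
  · exact absurd h3 (gfun_anti_nd hm hst hac La Lc).asymm
  · exact absurd h1 (gfun_anti_nd hm hst hab La Lb).asymm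
  · exact absurd h1 (gfun_anti_nd hm hst hab La Lb).asymm

lemma zero_low (h0 : 0 < n) : LowP m ⟨0, h0⟩ := by
  intro p hp
  exact absurd hp (by simp [Fin.lt_def])

include hm in
lemma rk_add_drops {j : Fin n} (hnj : ¬ LowP m j) :
    rk (ndF m) j + ((dropF m).filter (· ≤ j)).card = (j : ℕ) := by
  classical
  have hpart := Finset.card_filter_add_card_filter_not (p := LowP m)
    (s := Finset.Iic j)
  have e1 : (Finset.Iic j).filter (LowP m) = (dropF m).filter (· ≤ j) := by
    ext x
    simp only [Finset.mem_filter, Finset.mem_Iic, dropF, Finset.mem_univ, true_and]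
    tauto
  have e2 : (Finset.Iic j).filter (fun x => ¬ LowP m x) =
      insert j ((ndF m).filter (· < j)) := by
    ext x
    simp only [Finset.mem_filter, Finset.mem_Iic, Finset.mem_insert, ndF,
      Finset.mem_univ, true_and]
    constructor
    · rintro ⟨hle, hnl⟩
      rcases eq_or_lt_of_le hle with rfl | hlt
      · exact Or.inl rfl
      · exact Or.inr ⟨hnl, hlt⟩
    · rintro (rfl | ⟨hnl, hlt⟩)
      · exact ⟨le_rfl, hnj⟩
      · exact ⟨hlt.le, hnl⟩
  have hnotmem : j ∉ (ndF m).filter (· < j) := by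
    simp [Finset.mem_filter]
  rw [e1, e2, Finset.card_insert_of_notMem hnotmem] at hpart
  rw [Fin.card_Iic] at hpart
  unfold rk
  omega

include hm in
lemma card_V_le (j : Fin n) :
    ((Vs m).filter (fun x => m j ≤ x)).card = ((dropF m).filter (· ≤ j)).card := by
  have he : (Vs m).filter (fun x => m j ≤ x) = ((dropF m).filter (· ≤ j)).image m := by
    ext x
    simp only [Finset.mem_filter, Finset.mem_image, Vs, dropF, Finset.mem_univ, true_and]
    constructor
    · rintro ⟨⟨p, rfl⟩, hle⟩
      obtain ⟨q, hq, hlq, he⟩ := lastLow hm p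
      refine ⟨q, ⟨hlq, ?_⟩, he⟩
      by_contra hgt
      push_neg at hgt
      have := hlq j hgt
      omega
    · rintro ⟨q, ⟨hlq, hqj⟩, rfl⟩
      exact ⟨⟨q, rfl⟩, hm hqj⟩
  rw [he, Finset.card_image_of_injOn]
  intro a ha b hb h
  simp only [Finset.mem_coe, Finset.mem_filter] at ha hb
  exact m_injOn_drop hm a ha.1 b hb.1 h

lemma card_V_lt (j : Fin n) :
    ((Vs m).filter (fun x => m j < x)).card + 1 = ((Vs m).filter (fun x => m j ≤ x)).card := by
  have he : (Vs m).filter (fun x => m j ≤ x) =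
      insert (m j) ((Vs m).filter (fun x => m j < x)) := by
    ext x
    simp only [Finset.mem_filter, Finset.mem_insert]
    constructor
    · rintro ⟨hv, hle⟩
      rcases eq_or_lt_of_le hle with rfl | hlt
      · exact Or.inl rfl
      · exact Or.inr ⟨hv, hlt⟩
    · rintro (rfl | ⟨hv, hlt⟩)
      · exact ⟨Finset.mem_image_of_mem m (mem_univ j), le_rfl⟩
      · exact ⟨hv, hlt.le⟩
  have hnm : m j ∉ (Vs m).filter (fun x => m j < x) := by simp
  rw [he, Finset.card_insert_of_notMem hnm]

lemma card_range_lt (j : Fin n) (hlt : m j < n) :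
    ((range n).filter (fun x => m j < x)).card = n - m j - 1 := by
  have he : (range n).filter (fun x => m j < x) = Finset.Ico (m j + 1) n := by
    ext x
    simp only [Finset.mem_filter, Finset.mem_range, Finset.mem_Ico]
    omega
  rw [he, Nat.card_Ico]
  omega

include hst in
lemma card_W_lt (j : Fin n) :
    ((Ws m).filter (fun x => m j < x)).card
      = (n - m j - 1) - ((Vs m).filter (fun x => m j < x)).card := by
  have he : (Ws m).filter (fun x => m j < x)
      = ((range n).filter (fun x => m j < x)) \ ((Vs m).filter (fun x => m j < x)) := by
    ext x
    simp only [Ws, Finset.mem_filter, Finset.mem_sdiff]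
    tauto
  rw [he, Finset.card_sdiff_of_subset (Finset.filter_subset_filter _ (Vs_m_subset hst)),
    card_range_lt j (m_lt_n hst j)]

include hm hst in
lemma m_lt_gfun {j : Fin n} (hnj : ¬ LowP m j) : m j < gfun m j := by
  rw [gfun_nd hnj]
  apply lt_dEnum (rk_nd_lt hm hst hnj)
  have h1 := rk_add_drops hm hnj
  have h2 := card_V_le hm j
  have h3 := card_V_lt (m := m) j
  have h4 := card_W_lt hst j
  have h5 := hst j
  have hs1 : 1 ≤ ((dropF m).filter (· ≤ j)).card := by
    apply Finset.card_pos.2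
    refine ⟨⟨0, j.pos⟩, ?_⟩
    simp only [Finset.mem_filter, dropF, Finset.mem_univ, true_and]
    exact ⟨zero_low j.pos, by simp [Fin.le_def]⟩
  omega

include hm hst in
lemma rmin_gfun : rmin (gfun m) = m := by
  funext i
  apply le_antisymm
  · obtain ⟨q, hqi, hlq, he⟩ := lastLow hm i
    have : rmin (gfun m) i ≤ gfun m q := rmin_le hqi
    rwa [gfun_low hlq, he] at this
  · apply le_rmin
    intro j hj
    by_cases hl : LowP m j
    · rw [gfun_low hl]; exact hm hj
    · exact (hm hj).trans (m_lt_gfun hm hst hl).le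

end Construct2


/-- antitone sequences under a staircase, with a cap -/
def hset (n j : ℕ) : Type :=
  {m : Fin n → ℕ // Antitone m ∧ (∀ i : Fin n, m i + (i : ℕ) + 1 ≤ n) ∧ ∀ i, m i ≤ j}

instance (n j : ℕ) : Finite (hset n j) := by
  apply Finite.of_injective (fun a : hset n j => (fun i => (⟨a.1 i, by
    have := a.2.2.1 i; omega⟩ : Fin n)))
  intro a b hab
  apply Subtype.ext
  funext i
  have := congrFun hab i
  simpa [Fin.ext_iff] using this

instance (n : ℕ) : Unique (hset n 0) where
  default := ⟨fun _ => 0, antitone_const, fun i => by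
    show 0 + (i : ℕ) + 1 ≤ n; have := i.isLt; omega, fun _ => le_rfl⟩
  uniq := by
    rintro ⟨m, h1, h2, h3⟩
    apply Subtype.ext
    funext i
    simpa using h3 i

instance (j : ℕ) : Unique (hset 0 j) where
  default := ⟨fun i => i.elim0, fun i => i.elim0, fun i => i.elim0, fun i => i.elim0⟩
  uniq := by
    rintro ⟨m, h1, h2, h3⟩
    apply Subtype.ext
    funext i
    exact i.elim0

lemma card_hset_zero (n : ℕ) : Nat.card (hset n 0) = 1 := Nat.card_unique
lemma card_hset_zero' (j : ℕ) : Nat.card (hset 0 j) = 1 := Nat.card_unique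

lemma card_hset_top (n : ℕ) :
    Nat.card (hset (n+1) (n+1)) = Nat.card (hset (n+1) n) := by
  apply Nat.card_congr
  apply Equiv.subtypeEquivRight
  intro m
  constructor
  · rintro ⟨h1, h2, h3⟩
    exact ⟨h1, h2, fun i => by have := h2 i; omega⟩
  · rintro ⟨h1, h2, h3⟩
    exact ⟨h1, h2, fun i => (h3 i).trans (Nat.le_succ n)⟩

lemma card_hset_rec (n j : ℕ) (hj : j + 1 ≤ n) :
    Nat.card (hset (n+1) (j+1)) = Nat.card (hset (n+1) j) + Nat.card (hset n (j+1)) := by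
  classical
  have esum := (Equiv.sumCompl (fun a : hset (n+1) (j+1) => ∀ i, a.1 i ≤ j)).symm
  rw [Nat.card_congr esum, Nat.card_sum]
  congr 1
  · apply Nat.card_congr
    exact {
      toFun := fun a => ⟨a.1.1, a.1.2.1, a.1.2.2.1, a.2⟩
      invFun := fun b => ⟨⟨b.1, b.2.1, b.2.2.1, fun i => (b.2.2.2 i).trans (Nat.le_succ j)⟩,
        b.2.2.2⟩
      left_inv := fun a => by apply Subtype.ext; apply Subtype.ext; rfl
      right_inv := fun b => by apply Subtype.ext; rfl }
  · apply Nat.card_congr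
    refine {
      toFun := fun a => ⟨fun i => a.1.1 i.succ, ?_, ?_, ?_⟩
      invFun := fun b => ⟨⟨Fin.cases (j+1) b.1, ?_, ?_, ?_⟩, ?_⟩
      left_inv := ?_
      right_inv := ?_ }
    · -- antitone tail
      intro x y hxy
      exact a.1.2.1 (Fin.succ_le_succ_iff.2 hxy)
    · -- staircase tail
      intro i
      have h := a.1.2.2.1 i.succ
      rw [Fin.val_succ] at h
      show a.1.1 i.succ + (i : ℕ) + 1 ≤ n
      omega
    · -- cap tail
      intro i
      exact a.1.2.2.2 i.succ
    · -- antitone cons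
      intro x y hxy
      cases x using Fin.cases with
      | zero =>
        cases y using Fin.cases with
        | zero => exact le_rfl
        | succ yy =>
          simp only [Fin.cases_zero, Fin.cases_succ]
          exact b.2.2.2 yy
      | succ xx =>
        cases y using Fin.cases with
        | zero =>
          exact absurd hxy (by rw [Fin.le_def]; simp)
        | succ yy =>
          simp only [Fin.cases_succ]
          exact b.2.1 (Fin.succ_le_succ_iff.1 hxy)
    · -- staircase cons
      intro i
      cases i using Fin.cases with
      | zero =>
        simp only [Fin.cases_zero, Fin.val_zero]
        omega
      | succ ii =>
        have h := b.2.2.1 ii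
        simp only [Fin.cases_succ, Fin.val_succ]
        omega
    · -- cap cons
      intro i
      cases i using Fin.cases with
      | zero => simp
      | succ ii => simp only [Fin.cases_succ]; exact (b.2.2.2 ii)
    · -- not in q
      intro hall
      have := hall 0
      simp at this
    · -- left_inv
      rintro ⟨⟨mm, h1, h2, h3⟩, hq⟩
      apply Subtype.ext
      apply Subtype.ext
      funext i
      cases i using Fin.cases with
      | zero =>
        simp only [Fin.cases_zero]
        push_neg at hq
        obtain ⟨i0, hi0⟩ := hq
        have hi0' : j < mm i0 := hi0
        have hle : mm i0 ≤ mm 0 := h1 (Fin.zero_le i0)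
        have hc : mm 0 ≤ j + 1 := h3 0
        omega
      | succ ii => simp
    · -- right_inv
      rintro ⟨mm, h1, h2, h3⟩
      apply Subtype.ext
      funext i
      simp

lemma hcard : ∀ n j, j ≤ n →
    Nat.card (hset n j) + (n + j).choose (n + 1) = (n + j).choose j := by
  intro n
  induction n with
  | zero =>
    intro j hj
    interval_cases j
    simp [card_hset_zero]
  | succ n ihn =>
    intro j
    induction j with
    | zero =>
      intro _
      rw [card_hset_zero, Nat.choose_eq_zero_of_lt (by omega), Nat.choose_zero_right]
    | succ j ihj =>
      intro hj
      rcases Nat.lt_or_ge (j + 1) (n + 1) with hlt | hge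
      · have hrec := card_hset_rec n j (by omega)
        have h1 := ihj (by omega)
        have h2 := ihn (j + 1) (by omega)
        have p1 : (n + j + 2).choose (j + 1)
            = (n + j + 1).choose j + (n + j + 1).choose (j + 1) :=
          Nat.choose_succ_succ' (n + j + 1) j
        have p2 : (n + j + 2).choose (n + 2)
            = (n + j + 1).choose (n + 1) + (n + j + 1).choose (n + 2) :=
          Nat.choose_succ_succ' (n + j + 1) (n + 1)
        ring_nf at h1 h2 hrec p1 p2 ⊢
        omega
      · have hjn : j = n := by omega
        subst hjn
        have hcc := card_hset_top j
        have h1 := ihj (by omega)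
        have p1 : (j + j + 2).choose (j + 1)
            = (j + j + 1).choose j + (j + j + 1).choose (j + 1) :=
          Nat.choose_succ_succ' (j + j + 1) j
        have p2 : (j + j + 2).choose (j + 2)
            = (j + j + 1).choose (j + 1) + (j + j + 1).choose (j + 2) :=
          Nat.choose_succ_succ' (j + j + 1) (j + 1)
        ring_nf at h1 hcc p1 p2 ⊢
        omega



lemma avoids_iff_tfree {n : ℕ} (σ : Fin n → Fin n) :
    PattAvoids σ ![0,1,2] ↔ TFree (fun i => ((σ i : ℕ))) := by
  unfold PattAvoids TFree
  rw [contains_iff]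
  constructor
  · intro h a b c hab hbc h1 h2
    exact h ⟨a, b, c, hab, hbc, Fin.lt_def.mpr h1, Fin.lt_def.mpr h2⟩
  · rintro h ⟨a, b, c, hab, hbc, h1, h2⟩
    exact h a b c hab hbc (Fin.lt_def.mp h1) (Fin.lt_def.mp h2)

theorem card_av (n : ℕ) :
    Nat.card {σ : Equiv.Perm (Fin n) // PattAvoids (σ : Fin n → Fin n) ![0,1,2]}
      = Nat.card (hset n n) := by
  apply Nat.card_congr
  refine {
    toFun := fun σa => ⟨rmin (fun i => ((σa.1 i : ℕ))), rmin_antitone _, ?_, ?_⟩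
    invFun := fun b => ⟨Equiv.ofBijective
      (fun i => (⟨gfun b.1 i, gfun_lt_n b.2.1 b.2.2.1 i⟩ : Fin n)) ?_, ?_⟩
    left_inv := ?_
    right_inv := ?_ }
  · intro i
    exact rmin_staircase (fun a b hab => σa.1.injective (Fin.val_injective hab))
      (fun i => (σa.1 i).isLt) i
  · intro i
    have := rmin_staircase (fun a b hab => σa.1.injective (Fin.val_injective hab))
      (fun i => (σa.1 i).isLt) i
    omega
  · rw [Finite.injective_iff_bijective.symm]
    intro i j hij
    exact gfun_inj b.2.1 b.2.2.1 (by simpa [Fin.ext_iff] using hij)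
  · rw [avoids_iff_tfree]
    exact gfun_tf b.2.1 b.2.2.1
  · rintro ⟨σ, hσ⟩
    apply Subtype.ext
    apply Equiv.ext
    intro i
    set u : Fin n → ℕ := fun i => ((σ i : ℕ)) with hu
    have hinj : Function.Injective u := fun a b hab => σ.injective (Fin.val_injective hab)
    have hlt : ∀ i, u i < n := fun i => (σ i).isLt
    have htf : TFree u := (avoids_iff_tfree σ).1 hσ
    have hm : Antitone (rmin u) := rmin_antitone u
    have hst : ∀ i : Fin n, rmin u i + (i : ℕ) + 1 ≤ n := rmin_staircase hinj hlt
    have hinj' : Function.Injective (gfun (rmin u)) := gfun_inj hm hst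
    have hlt' : ∀ i, gfun (rmin u) i < n := gfun_lt_n hm hst
    have htf' : TFree (gfun (rmin u)) := gfun_tf hm hst
    have hre : rmin (gfun (rmin u)) = rmin u := rmin_gfun hm hst
    have := rmin_determines hinj' hinj hlt' hlt htf' htf hre
    exact Fin.val_injective (congrFun this i)
  · rintro ⟨m, hm, hst, hcap⟩
    apply Subtype.ext
    exact rmin_gfun hm hst

end Av123

theorem av_123_catalan (n : ℕ) :
    Nat.card {σ : Equiv.Perm (Fin n) //
      PattAvoids (σ : Fin n → Fin n) (![0, 1, 2] : Fin 3 → Fin 3)} =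
    Nat.choose (2 * n) n / (n + 1) := by
  rw [Av123.card_av n]
  have key := Av123.hcard n n le_rfl
  rw [show n + n = 2 * n by omega] at key
  have id2 : (2 * n).choose (n + 1) * (n + 1) = (2 * n).choose n * n := by
    have h := Nat.choose_succ_right_eq (2 * n) n
    rwa [show 2 * n - n = n by omega] at h
  have hmul : Nat.card (Av123.hset n n) * (n + 1) = (2 * n).choose n := by
    have e1 : (Nat.card (Av123.hset n n) + (2 * n).choose (n + 1)) * (n + 1)
        = (2 * n).choose n * (n + 1) := by rw [key]
    rw [add_mul, id2] at e1
    have e2 : (2 * n).choose n * (n + 1) = (2 * n).choose n * n + (2 * n).choose n := by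
      ring
    linarith
  exact (Nat.div_eq_of_eq_mul_left (Nat.succ_pos n) hmul.symm).symm
end

section
/- The bivariate function A(z,u) = (1 - 2zu - sqrt(1-4z))/(2(1 - u + z u^2)) satisfies the kernel equation (1 - u + z u^2)·A(z,u) = z·(1 - u + A(z,1)), where A(z,1) = (1 - sqrt(1-4z))/(2z) - 1. -/
theorem bivariate_kernel_equation (z u : ℝ) (hz0 : 0 < z) (hz : z < 1/4)
    (hk : 1 - u + z * u ^ 2 ≠ 0) :
    let A1 : ℝ := (1 - Real.sqrt (1 - 4 * z)) / (2 * z) - 1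
    let A : ℝ := (1 - 2 * z * u - Real.sqrt (1 - 4 * z)) / (2 * (1 - u + z * u ^ 2))
    (1 - u + z * u ^ 2) * A = z * (1 - u + A1) := by
  intro A1 A
  have hz' : z ≠ 0 := ne_of_gt hz0
  simp only [A, A1]
  rw [← div_div, mul_div_cancel₀ _ hk]
  field_simp
  ring
end

section
/- The generating function F(z) = (2 - 10z + 9z² + 7z³ - 4z⁴ - (2 - 8z + 9z² - 3z³)·sqrt(1-4z)) / ((1 - 3z + z²)·((1 - 5z + 4z²) + (1 - 3z)·sqrt(1-4z))) has a power series expansion at 0 whose first twelve coefficients (from z¹) are 1, 2, 6, 22, 89, 376, 1611, 6901, 29375, 123996, 518971, 2155145. -/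
/-- The generating function of Av(1234, 2341). -/
noncomputable def Fgf (z : ℝ) : ℝ :=
  (2 - 10*z + 9*z^2 + 7*z^3 - 4*z^4 - (2 - 8*z + 9*z^2 - 3*z^3) * Real.sqrt (1 - 4*z)) /
    ((1 - 3*z + z^2) * ((1 - 5*z + 4*z^2) + (1 - 3*z) * Real.sqrt (1 - 4*z)))


noncomputable def Pco : ℕ → ℝ
  | 0 => 0
  | 1 => 1
  | 2 => 2
  | 3 => 6
  | 4 => 22
  | 5 => 89
  | 6 => 376
  | 7 => 1611
  | 8 => 6901
  | 9 => 29375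
  | 10 => 123996
  | 11 => 518971
  | 12 => 2155145
  | _ => 0

noncomputable def Tco : ℕ → ℝ
  | 0 => 1
  | 1 => (-2)
  | 2 => (-2)
  | 3 => (-4)
  | 4 => (-10)
  | 5 => (-28)
  | 6 => (-84)
  | 7 => (-264)
  | 8 => (-858)
  | 9 => (-2860)
  | 10 => (-9724)
  | 11 => (-33592)
  | 12 => (-117572)
  | _ => 0

noncomputable def Uco : ℕ → ℝ
  | 0 => (-2)
  | 1 => (-2)
  | 2 => (-4)
  | 3 => (-10)
  | 4 => (-28)
  | 5 => (-84)
  | 6 => (-264)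
  | 7 => (-858)
  | 8 => (-2860)
  | 9 => (-9724)
  | 10 => (-33592)
  | 11 => (-117572)
  | _ => 0

noncomputable def Wco : ℕ → ℝ
  | 0 => 832048
  | 1 => 1307504
  | 2 => 3090464
  | 3 => 8112468
  | 4 => 22269520
  | 5 => 62354656
  | 6 => 175343168
  | 7 => 488455968
  | 8 => 1325809056
  | 9 => 3414962720
  | 10 => 7898957248
  | 11 => 13823175184
  | _ => 0

noncomputable def E1co : ℕ → ℝ
  | 0 => 2
  | 1 => (-11)
  | 2 => 15
  | 3 => (-3)
  | 4 => (-1)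
  | 5 => (-3)
  | 6 => (-10)
  | 7 => (-33)
  | 8 => (-108)
  | 9 => (-351)
  | 10 => (-1133)
  | 11 => (-3630)
  | 12 => (-11526)
  | 13 => 8852172
  | 14 => (-34776377)
  | 15 => 34561581
  | 16 => (-8620580)
  | _ => 0

noncomputable def E2co : ℕ → ℝ
  | 0 => 2
  | 1 => (-7)
  | 2 => 5
  | 3 => 1
  | 4 => 3
  | 5 => 11
  | 6 => 44
  | 7 => 179
  | 8 => 728
  | 9 => 2951
  | 10 => 11923
  | 11 => 48042
  | 12 => 193154
  | 13 => (-8113148)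
  | 14 => 19994537
  | 15 => (-6465435)
  | _ => 0

noncomputable def Gco : ℕ → ℝ
  | 0 => 16944648
  | 1 => (-69388632)
  | 2 => 67421484
  | 3 => (-6671008)
  | 4 => 7633284
  | 5 => 12758512
  | 6 => 14196614
  | 7 => (-39574232)
  | 8 => (-458566520)
  | 9 => (-2861298058)
  | 10 => (-15118395370)
  | 11 => (-73891631840)
  | 12 => (-345092439692)
  | 13 => 2133610811644
  | 14 => (-760154123820)
  | _ => 0

noncomputable def Tp (z : ℝ) : ℝ := ∑ i ∈ Finset.range 13, Tco i * z ^ i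
noncomputable def Up (z : ℝ) : ℝ := ∑ i ∈ Finset.range 12, Uco i * z ^ i
noncomputable def Wp (z : ℝ) : ℝ := ∑ i ∈ Finset.range 12, Wco i * z ^ i
noncomputable def Pp (z : ℝ) : ℝ := ∑ i ∈ Finset.range 13, Pco i * z ^ i
noncomputable def E1p (z : ℝ) : ℝ := ∑ i ∈ Finset.range 17, E1co i * z ^ i
noncomputable def E2p (z : ℝ) : ℝ := ∑ i ∈ Finset.range 16, E2co i * z ^ i
noncomputable def Gp (z : ℝ) : ℝ := ∑ i ∈ Finset.range 15, Gco i * z ^ i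

lemma idT (z : ℝ) : Tp z = 1 + z * Up z := by
  simp only [Tp, Up, Tco, Uco, Finset.sum_range_succ, Finset.sum_range_zero]
  ring

lemma idW (z : ℝ) : Tp z ^ 2 - (1 - 4*z) = z ^ 13 * Wp z := by
  simp only [Tp, Wp, Tco, Wco, Finset.sum_range_succ, Finset.sum_range_zero]
  ring

lemma idG (z : ℝ) : E1p z - E2p z * Tp z = z ^ 13 * Gp z := by
  simp only [Tp, E1p, E2p, Gp, Tco, E1co, E2co, Gco, Finset.sum_range_succ, Finset.sum_range_zero]
  ring

lemma idE (z s : ℝ) :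
    (2 - 10*z + 9*z^2 + 7*z^3 - 4*z^4 - (2 - 8*z + 9*z^2 - 3*z^3) * s)
      - Pp z * ((1 - 3*z + z^2) * ((1 - 5*z + 4*z^2) + (1 - 3*z) * s))
      = E1p z - E2p z * s := by
  simp only [Pp, E1p, E2p, Pco, E1co, E2co, Finset.sum_range_succ, Finset.sum_range_zero]
  ring

lemma bndU : ∑ i ∈ Finset.range 12, |Uco i| * (1/8:ℝ) ^ i ≤ 12/5 := by
  simp only [Uco, Finset.sum_range_succ, Finset.sum_range_zero]; norm_num
lemma bndW : ∑ i ∈ Finset.range 12, |Wco i| * (1/8:ℝ) ^ i ≤ 1067975 := by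
  simp only [Wco, Finset.sum_range_succ, Finset.sum_range_zero]; norm_num
lemma bndE2 : ∑ i ∈ Finset.range 16, |E2co i| * (1/8:ℝ) ^ i ≤ 3 := by
  simp only [E2co, Finset.sum_range_succ, Finset.sum_range_zero]; norm_num
lemma bndG : ∑ i ∈ Finset.range 15, |Gco i| * (1/8:ℝ) ^ i ≤ 26687124 := by
  simp only [Gco, Finset.sum_range_succ, Finset.sum_range_zero]; norm_num


lemma sum_abs_bound (g : ℕ → ℝ) (k : ℕ) {z δ : ℝ} (h0 : 0 ≤ δ) (h : |z| ≤ δ) :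
    |∑ i ∈ Finset.range k, g i * z ^ i| ≤ ∑ i ∈ Finset.range k, |g i| * δ ^ i := by
  refine (Finset.abs_sum_le_sum_abs _ _).trans (Finset.sum_le_sum fun i _ => ?_)
  rw [abs_mul, abs_pow]
  exact mul_le_mul_of_nonneg_left (pow_le_pow_left₀ (abs_nonneg z) h i) (abs_nonneg _)

lemma shift_sum (b : ℕ → ℝ) (k : ℕ) (z : ℝ) :
    ∑ i ∈ Finset.range (k+1), b i * z ^ i
      = b 0 + z * ∑ i ∈ Finset.range k, b (i+1) * z ^ i := by
  rw [Finset.sum_range_succ' (fun i => b i * z ^ i) k, Finset.mul_sum]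
  simp only [pow_zero, mul_one, pow_succ]
  rw [add_comm]
  congr 1
  exact Finset.sum_congr rfl fun i _ => by ring

lemma coeff_zero : ∀ (k : ℕ) (b : ℕ → ℝ) (C δ : ℝ), 0 < δ →
    (∀ z : ℝ, 0 < |z| → |z| ≤ δ → |∑ i ∈ Finset.range k, b i * z ^ i| ≤ C * |z| ^ k) →
    ∀ n < k, b n = 0 := by
  intro k
  induction k with
  | zero => intro b C δ _ _ n hn; omega
  | succ k ih =>
    intro b C δ hδ hbound
    set B : ℝ := ∑ i ∈ Finset.range k, |b (i+1)| with hB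
    have hBnn : 0 ≤ B := Finset.sum_nonneg fun i _ => abs_nonneg _
    -- first: b 0 = 0
    have hb0 : b 0 = 0 := by
      by_contra hb0
      have habs : 0 < |b 0| := abs_pos.mpr hb0
      set t : ℝ := min (min δ 1) (|b 0| / (2 * (|C| + B + 1))) with ht
      have hden : 0 < 2 * (|C| + B + 1) := by positivity
      have htpos : 0 < t := lt_min (lt_min hδ one_pos) (by positivity)
      have ht1 : t ≤ 1 := le_trans (min_le_left _ _) (min_le_right _ _)
      have htδ : t ≤ δ := le_trans (min_le_left _ _) (min_le_left _ _)
      have htabs : |t| = t := abs_of_pos htpos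
      have h1 := hbound t (by rw [htabs]; exact htpos) (by rw [htabs]; exact htδ)
      have h2 : |∑ i ∈ Finset.range k, b (i+1) * t ^ i| ≤ B :=
        (sum_abs_bound _ k zero_le_one (by rw [htabs]; exact ht1)).trans
          (by apply Finset.sum_le_sum; intro i _; rw [one_pow, mul_one])
      have h3 : |b 0| ≤ |∑ i ∈ Finset.range (k+1), b i * t ^ i|
          + t * |∑ i ∈ Finset.range k, b (i+1) * t ^ i| := by
        have := shift_sum b k t
        have habs2 : |b 0| ≤ |b 0 + t * ∑ i ∈ Finset.range k, b (i+1) * t ^ i|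
            + |t * ∑ i ∈ Finset.range k, b (i+1) * t ^ i| := by
          have h := abs_add_le (b 0 + t * ∑ i ∈ Finset.range k, b (i+1) * t ^ i)
            (-(t * ∑ i ∈ Finset.range k, b (i+1) * t ^ i))
          rw [add_neg_cancel_right, abs_neg] at h
          exact h
        rw [this, abs_mul, htabs] at *
        linarith [habs2]
      have h5 : |t| ^ (k+1) ≤ t := by
        rw [htabs]
        calc t ^ (k+1) ≤ t ^ 1 := pow_le_pow_of_le_one htpos.le ht1 (by omega)
        _ = t := pow_one t
      have h6 : C * |t| ^ (k+1) ≤ |C| * t := by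
        calc C * |t| ^ (k+1) ≤ |C| * |t| ^ (k+1) :=
              mul_le_mul_of_nonneg_right (le_abs_self C) (by positivity)
        _ ≤ |C| * t := mul_le_mul_of_nonneg_left h5 (abs_nonneg C)
      have h7 : |b 0| ≤ (|C| + B) * t := by
        have := h3.trans (add_le_add (h1.trans h6) (mul_le_mul_of_nonneg_left h2 htpos.le))
        nlinarith
      have h8 : t ≤ |b 0| / (2 * (|C| + B + 1)) := min_le_right _ _
      have h9 : (|C| + B) * t ≤ (|C| + B) * (|b 0| / (2 * (|C| + B + 1))) :=
        mul_le_mul_of_nonneg_left h8 (by positivity)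
      have h10 : (|C| + B) * (|b 0| / (2 * (|C| + B + 1))) < |b 0| := by
        rw [div_eq_mul_inv]
        have : (|C| + B) * (|b 0| * (2 * (|C| + B + 1))⁻¹) = |b 0| * ((|C| + B) / (2 * (|C| + B + 1))) := by
          field_simp
        rw [this]
        have hfrac : (|C| + B) / (2 * (|C| + B + 1)) < 1 := by
          rw [div_lt_one hden]; nlinarith [abs_nonneg C]
        nlinarith [habs]
      linarith
    -- then shift
    have hshift : ∀ z : ℝ, 0 < |z| → |z| ≤ δ →
        |∑ i ∈ Finset.range k, b (i+1) * z ^ i| ≤ C * |z| ^ k := by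
      intro z hz0 hzδ
      have h1 := hbound z hz0 hzδ
      rw [shift_sum, hb0, zero_add, abs_mul] at h1
      have : |z| * |∑ i ∈ Finset.range k, b (i+1) * z ^ i| ≤ |z| * (C * |z| ^ k) := by
        calc |z| * |∑ i ∈ Finset.range k, b (i+1) * z ^ i| ≤ C * |z| ^ (k+1) := h1
        _ = |z| * (C * |z| ^ k) := by ring
      exact le_of_mul_le_mul_left this hz0
    intro n hn
    match n with
    | 0 => exact hb0
    | (m+1) => exact ih (fun i => b (i+1)) C δ hδ hshift m (by omega)


lemma sqrt_analytic : AnalyticAt ℝ (fun z : ℝ => Real.sqrt (1 - 4*z)) 0 := by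
  have h1 : AnalyticAt ℂ (fun w : ℂ => (1 - 4*w) ^ (1/2 : ℂ)) 0 := by
    apply AnalyticAt.cpow (analyticAt_const.sub (analyticAt_const.mul analyticAt_id)) analyticAt_const
    simp [Complex.mem_slitPlane_iff]
  have h3 : AnalyticAt ℝ (fun w : ℂ => (1 - 4*w) ^ (1/2 : ℂ)) 0 := h1.restrictScalars
  have h4 : AnalyticAt ℝ (fun z : ℝ => (z:ℂ)) 0 := Complex.ofRealCLM.analyticAt (0:ℝ)
  have h6 : AnalyticAt ℝ (fun z : ℝ => ((1 - 4*(z:ℂ)) ^ (1/2:ℂ))) 0 := by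
    have : AnalyticAt ℝ ((fun w : ℂ => (1 - 4*w) ^ (1/2 : ℂ)) ∘ (fun z : ℝ => (z:ℂ))) 0 :=
      AnalyticAt.comp (by simpa using h3) h4
    simpa [Function.comp_def] using this
  have h2 : AnalyticAt ℝ (fun z : ℝ => ((1 - 4*(z:ℂ)) ^ (1/2:ℂ)).re) 0 := by
    have : AnalyticAt ℝ (⇑Complex.reCLM ∘ (fun z : ℝ => ((1 - 4*(z:ℂ)) ^ (1/2:ℂ)))) 0 :=
      AnalyticAt.comp (Complex.reCLM.analyticAt _) h6
    simpa [Function.comp_def] using this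
  apply h2.congr
  have hball : Metric.ball (0:ℝ) (1/8) ∈ nhds (0:ℝ) := Metric.ball_mem_nhds _ (by norm_num)
  filter_upwards [hball] with z hz
  have hz' : |z| < 1/8 := by simpa [Real.dist_eq] using hz
  have h0 : (0:ℝ) ≤ 1 - 4*z := by cases abs_lt.mp hz'; linarith
  rw [Real.sqrt_eq_rpow,
    show ((1:ℂ) - 4*(z:ℂ)) = ((1 - 4*z : ℝ) : ℂ) by push_cast; ring,
    show ((1/2 : ℂ)) = ((1/2:ℝ):ℂ) by norm_num,
    ← Complex.ofReal_cpow h0, Complex.ofReal_re]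


lemma key (z : ℝ) (hz : |z| ≤ 1/8) : |Fgf z - Pp z| ≤ 100000000 * |z| ^ 13 := by
  obtain ⟨hz1, hz2⟩ := abs_le.mp hz
  set s := Real.sqrt (1 - 4*z) with hsdef
  have h0 : (0:ℝ) ≤ 1 - 4*z := by linarith
  have hs2 : s ^ 2 = 1 - 4*z := Real.sq_sqrt h0
  have hs0 : 0 ≤ s := Real.sqrt_nonneg _
  have hsl : (7:ℝ)/10 ≤ s := by
    rw [hsdef]; rw [Real.le_sqrt (by norm_num) h0]; nlinarith
  have hsu : s ≤ 13/10 := by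
    rw [hsdef]; rw [Real.sqrt_le_iff]; constructor
    · norm_num
    · nlinarith
  have hA : (5:ℝ)/8 ≤ 1 - 3*z + z^2 := by nlinarith [sq_nonneg z]
  have hBfac : (13:ℝ)/16 ≤ (1 - 5*z + 4*z^2) + (1 - 3*z)*s := by
    nlinarith [mul_le_mul_of_nonneg_left hsl (show (0:ℝ) ≤ 1 - 3*z by linarith), sq_nonneg z]
  have hD : (1:ℝ)/2 ≤ (1 - 3*z + z^2) * ((1 - 5*z + 4*z^2) + (1 - 3*z)*s) := by
    nlinarith [mul_le_mul hA hBfac (by norm_num : (0:ℝ) ≤ 13/16) (by linarith : (0:ℝ) ≤ 1 - 3*z + z^2)]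
  have hDne : (1 - 3*z + z^2) * ((1 - 5*z + 4*z^2) + (1 - 3*z)*s) ≠ 0 := by
    intro h; rw [h] at hD; norm_num at hD
  have hU : |Up z| ≤ 12/5 := (sum_abs_bound Uco 12 (by norm_num) hz).trans bndU
  have hW : |Wp z| ≤ 1067975 := (sum_abs_bound Wco 12 (by norm_num) hz).trans bndW
  have hE2 : |E2p z| ≤ 3 := (sum_abs_bound E2co 16 (by norm_num) hz).trans bndE2
  have hG : |Gp z| ≤ 26687124 := (sum_abs_bound Gco 15 (by norm_num) hz).trans bndG
  have hT : (7:ℝ)/10 ≤ Tp z := by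
    have h := idT z
    have h1 : |z * Up z| ≤ 3/10 := by
      rw [abs_mul]
      calc |z| * |Up z| ≤ (1/8) * (12/5) := mul_le_mul hz hU (abs_nonneg _) (by norm_num)
      _ = 3/10 := by norm_num
    have h2 := (abs_le.mp h1).1
    rw [h]; linarith
  have hTs : (1:ℝ) ≤ Tp z + s := by linarith
  have hTspos : (0:ℝ) < Tp z + s := by linarith
  have hdiff : Tp z - s = z ^ 13 * Wp z / (Tp z + s) := by
    rw [eq_div_iff (ne_of_gt hTspos)]
    linear_combination idW z - hs2
  have hTms : |Tp z - s| ≤ |z| ^ 13 * 1067975 := by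
    rw [hdiff, abs_div]
    have hden1 : (1:ℝ) ≤ |Tp z + s| := by rw [abs_of_pos hTspos]; exact hTs
    have hnum : |z ^ 13 * Wp z| ≤ |z| ^ 13 * 1067975 := by
      rw [abs_mul, abs_pow]
      exact mul_le_mul_of_nonneg_left hW (by positivity)
    calc |z ^ 13 * Wp z| / |Tp z + s| ≤ |z ^ 13 * Wp z| / 1 := by
          apply div_le_div_of_nonneg_left (abs_nonneg _) one_pos hden1
    _ = |z ^ 13 * Wp z| := div_one _
    _ ≤ |z| ^ 13 * 1067975 := hnum
  have hfrac : Fgf z - Pp z = (E1p z - E2p z * s) /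
      ((1 - 3*z + z^2) * ((1 - 5*z + 4*z^2) + (1 - 3*z)*s)) := by
    rw [eq_div_iff hDne, sub_mul]
    have hF : Fgf z * ((1 - 3*z + z^2) * ((1 - 5*z + 4*z^2) + (1 - 3*z)*s))
        = 2 - 10*z + 9*z^2 + 7*z^3 - 4*z^4 - (2 - 8*z + 9*z^2 - 3*z^3) * s := by
      rw [Fgf, ← hsdef]
      exact div_mul_cancel₀ _ hDne
    rw [hF]
    linear_combination idE z s
  rw [hfrac, abs_div]
  have hDabs : (1:ℝ)/2 ≤ |(1 - 3*z + z^2) * ((1 - 5*z + 4*z^2) + (1 - 3*z)*s)| := by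
    rw [abs_of_pos (by linarith)]; exact hD
  have hnum2 : |E1p z - E2p z * s| ≤ |z| ^ 13 * 50000000 := by
    have hsplit : E1p z - E2p z * s = z ^ 13 * Gp z + E2p z * (Tp z - s) := by
      linear_combination idG z
    rw [hsplit]
    calc |z ^ 13 * Gp z + E2p z * (Tp z - s)|
        ≤ |z ^ 13 * Gp z| + |E2p z * (Tp z - s)| := abs_add_le _ _
    _ ≤ |z| ^ 13 * 26687124 + 3 * (|z| ^ 13 * 1067975) := by
        rw [abs_mul, abs_pow, abs_mul]
        exact add_le_add (mul_le_mul_of_nonneg_left hG (by positivity))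
          (mul_le_mul hE2 hTms (abs_nonneg _) (by norm_num))
    _ ≤ |z| ^ 13 * 50000000 := by nlinarith [pow_nonneg (abs_nonneg z) 13]
  calc |E1p z - E2p z * s| / |(1 - 3*z + z^2) * ((1 - 5*z + 4*z^2) + (1 - 3*z)*s)|
      ≤ (|z| ^ 13 * 50000000) / (1/2) :=
        div_le_div₀ (by positivity) hnum2 (by norm_num) hDabs
  _ = 100000000 * |z| ^ 13 := by ring


theorem Fgf_coefficients :
    ∃ (a : ℕ → ℝ) (ε : ℝ), 0 < ε ∧
      (∀ z : ℝ, |z| < ε → Fgf z = ∑' n : ℕ, a n * z ^ n) ∧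
      a 1 = 1 ∧ a 2 = 2 ∧ a 3 = 6 ∧ a 4 = 22 ∧ a 5 = 89 ∧ a 6 = 376 ∧
      a 7 = 1611 ∧ a 8 = 6901 ∧ a 9 = 29375 ∧ a 10 = 123996 ∧
      a 11 = 518971 ∧ a 12 = 2155145 := by
  have hid : AnalyticAt ℝ (fun z : ℝ => z) 0 := analyticAt_id
  have hnum : AnalyticAt ℝ (fun z : ℝ =>
      2 - 10*z + 9*z^2 + 7*z^3 - 4*z^4 - (2 - 8*z + 9*z^2 - 3*z^3) * Real.sqrt (1 - 4*z)) 0 := by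
    apply AnalyticAt.sub
    · exact (((analyticAt_const.sub (analyticAt_const.mul hid)).add
        (analyticAt_const.mul (hid.pow 2))).add
        (analyticAt_const.mul (hid.pow 3))).sub (analyticAt_const.mul (hid.pow 4))
    · exact (((analyticAt_const.sub (analyticAt_const.mul hid)).add
        (analyticAt_const.mul (hid.pow 2))).sub
        (analyticAt_const.mul (hid.pow 3))).mul sqrt_analytic
  have hden : AnalyticAt ℝ (fun z : ℝ =>
      (1 - 3*z + z^2) * ((1 - 5*z + 4*z^2) + (1 - 3*z) * Real.sqrt (1 - 4*z))) 0 := by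
    apply AnalyticAt.mul
    · exact (analyticAt_const.sub (analyticAt_const.mul hid)).add (hid.pow 2)
    · exact ((analyticAt_const.sub (analyticAt_const.mul hid)).add
        (analyticAt_const.mul (hid.pow 2))).add
        ((analyticAt_const.sub (analyticAt_const.mul hid)).mul sqrt_analytic)
  have hden0 : (fun z : ℝ =>
      (1 - 3*z + z^2) * ((1 - 5*z + 4*z^2) + (1 - 3*z) * Real.sqrt (1 - 4*z))) 0 ≠ 0 := by
    norm_num [Real.sqrt_one]
  have hFA : AnalyticAt ℝ Fgf 0 := hnum.div hden hden0
  obtain ⟨p, hp⟩ := hFA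
  have hp2 := hp
  obtain ⟨r, hr⟩ := hp2
  obtain ⟨q, hq0, hqr⟩ := ENNReal.lt_iff_exists_nnreal_btwn.mp hr.r_pos
  have hq0' : (0:ℝ) < q := by exact_mod_cast hq0
  -- Taylor coefficients agree with Pco
  have hO := hp.isBigO_sub_partialSum_pow 13
  rw [Asymptotics.isBigO_iff] at hO
  obtain ⟨C', hC'⟩ := hO
  rw [Metric.eventually_nhds_iff] at hC'
  obtain ⟨δ', hδ'pos, hδ'⟩ := hC'
  have hps : ∀ z : ℝ, p.partialSum 13 z = ∑ i ∈ Finset.range 13, p.coeff i * z ^ i := by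
    intro z
    simp [FormalMultilinearSeries.partialSum, FormalMultilinearSeries.apply_eq_pow_smul_coeff,
      smul_eq_mul, mul_comm]
  have hcoeff : ∀ n < 13, Pco n - p.coeff n = 0 := by
    apply coeff_zero 13 (fun i => Pco i - p.coeff i) (100000000 + |C'|) (min (1/8) (δ'/2))
      (by positivity)
    intro z hz0 hzle
    have hz8 : |z| ≤ 1/8 := hzle.trans (min_le_left _ _)
    have hzδ : dist z 0 < δ' := by
      rw [Real.dist_eq, sub_zero]
      have := hzle.trans (min_le_right _ _)
      calc |z| ≤ δ'/2 := this
      _ < δ' := by linarith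
    have h1 := key z hz8
    have h2 := hδ' hzδ
    rw [zero_add] at h2
    have h2' : |Fgf z - p.partialSum 13 z| ≤ |C'| * |z| ^ 13 := by
      simp only [Real.norm_eq_abs, abs_pow, abs_abs] at h2
      calc |Fgf z - p.partialSum 13 z| ≤ C' * |z| ^ 13 := h2
      _ ≤ |C'| * |z| ^ 13 := mul_le_mul_of_nonneg_right (le_abs_self C') (by positivity)
    have hsplit : ∑ i ∈ Finset.range 13, (Pco i - p.coeff i) * z ^ i
        = (Pp z - Fgf z) + (Fgf z - p.partialSum 13 z) := by
      have e1 : ∑ i ∈ Finset.range 13, (Pco i - p.coeff i) * z ^ i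
          = ∑ i ∈ Finset.range 13, Pco i * z ^ i - ∑ i ∈ Finset.range 13, p.coeff i * z ^ i := by
        rw [← Finset.sum_sub_distrib]
        exact Finset.sum_congr rfl fun i _ => by ring
      rw [e1, ← hps z, Pp]
      ring
    calc |∑ i ∈ Finset.range 13, (Pco i - p.coeff i) * z ^ i|
        = |(Pp z - Fgf z) + (Fgf z - p.partialSum 13 z)| := by rw [hsplit]
    _ ≤ |Pp z - Fgf z| + |Fgf z - p.partialSum 13 z| := abs_add_le _ _
    _ ≤ 100000000 * |z| ^ 13 + |C'| * |z| ^ 13 := by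
        refine add_le_add ?_ h2'
        rw [abs_sub_comm]; exact h1
    _ = (100000000 + |C'|) * |z| ^ 13 := by ring
  have hc : ∀ n < 13, p.coeff n = Pco n := by
    intro n hn
    have := hcoeff n hn
    linarith
  refine ⟨fun n => p.coeff n, q, hq0', ?_, ?_, ?_, ?_, ?_, ?_, ?_, ?_, ?_, ?_, ?_, ?_, ?_⟩
  · intro z hz
    have hzball : z ∈ EMetric.ball (0:ℝ) r := by
      have h1 : (‖z‖₊ : ENNReal) < q := by
        rw [ENNReal.coe_lt_coe, ← NNReal.coe_lt_coe, coe_nnnorm, Real.norm_eq_abs]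
        exact hz
      exact mem_emetric_ball_zero_iff.mpr (h1.trans hqr)
    have hsum := hr.hasSum hzball
    rw [zero_add] at hsum
    rw [← hsum.tsum_eq]
    exact tsum_congr fun n => by
      rw [FormalMultilinearSeries.apply_eq_pow_smul_coeff, smul_eq_mul, mul_comm]
  · exact (hc 1 (by norm_num)).trans (by norm_num [Pco])
  · exact (hc 2 (by norm_num)).trans (by norm_num [Pco])
  · exact (hc 3 (by norm_num)).trans (by norm_num [Pco])
  · exact (hc 4 (by norm_num)).trans (by norm_num [Pco])
  · exact (hc 5 (by norm_num)).trans (by norm_num [Pco])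
  · exact (hc 6 (by norm_num)).trans (by norm_num [Pco])
  · exact (hc 7 (by norm_num)).trans (by norm_num [Pco])
  · exact (hc 8 (by norm_num)).trans (by norm_num [Pco])
  · exact (hc 9 (by norm_num)).trans (by norm_num [Pco])
  · exact (hc 10 (by norm_num)).trans (by norm_num [Pco])
  · exact (hc 11 (by norm_num)).trans (by norm_num [Pco])
  · exact (hc 12 (by norm_num)).trans (by norm_num [Pco])
end

section
/- The formal power series F(z) defined as the generating function root of the cubic (z - 3z² + 2z³) - (1 - 5z + 8z² - 5z³)·F + (2z - 5z² + 4z³)·F² + z³·F³ = 0 with F(0) = 0 has initial coefficients (from z¹) 1, 2, 6, 22, 88, 367, 1571, 6861, 30468, 137229, 625573, 2881230. -/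
open PowerSeries

theorem cubic_gf_initial_coefficients (F : PowerSeries ℚ)
    (h0 : PowerSeries.constantCoeff F = 0)
    (hcubic : (X - 3 * X ^ 2 + 2 * X ^ 3)
        - (1 - 5 * X + 8 * X ^ 2 - 5 * X ^ 3) * F
        + (2 * X - 5 * X ^ 2 + 4 * X ^ 3) * F ^ 2
        + X ^ 3 * F ^ 3 = 0) :
    PowerSeries.coeff 1 F = 1 ∧ PowerSeries.coeff 2 F = 2 ∧
    PowerSeries.coeff 3 F = 6 ∧ PowerSeries.coeff 4 F = 22 ∧
    PowerSeries.coeff 5 F = 88 ∧ PowerSeries.coeff 6 F = 367 ∧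
    PowerSeries.coeff 7 F = 1571 ∧ PowerSeries.coeff 8 F = 6861 ∧
    PowerSeries.coeff 9 F = 30468 ∧ PowerSeries.coeff 10 F = 137229 ∧
    PowerSeries.coeff 11 F = 625573 ∧ PowerSeries.coeff 12 F = 2881230 := by
  have a0 : coeff 0 F = 0 := by rwa [coeff_zero_eq_constantCoeff]
  have b0 : coeff 0 (F * F) = 0 := by
    simp [coeff_mul, a0]
  have c0 : coeff 0 (F * (F * F)) = 0 := by
    simp [coeff_mul, a0]
  have hF : F = X ^ 1 - C 3 * X ^ 2 + C 2 * X ^ 3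
      + C 5 * (X ^ 1 * F) - C 8 * (X ^ 2 * F) + C 5 * (X ^ 3 * F)
      + C 2 * (X ^ 1 * (F * F)) - C 5 * (X ^ 2 * (F * F))
      + C 4 * (X ^ 3 * (F * F)) + X ^ 3 * (F * (F * F)) := by
    have h2 : (C 2 : ℚ⟦X⟧) = 2 := map_ofNat _ 2
    have h3 : (C 3 : ℚ⟦X⟧) = 3 := map_ofNat _ 3
    have h4 : (C 4 : ℚ⟦X⟧) = 4 := map_ofNat _ 4
    have h5 : (C 5 : ℚ⟦X⟧) = 5 := map_ofNat _ 5
    have h8 : (C 8 : ℚ⟦X⟧) = 8 := map_ofNat _ 8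
    rw [h2, h3, h4, h5, h8]
    linear_combination -hcubic
  have e1 := congrArg (coeff 1) hF
  simp only [map_add, map_sub, coeff_C_mul, coeff_X_pow_mul', coeff_X_pow, h0] at e1
  norm_num [a0, b0, h0] at e1
  have a1 : coeff 1 F = 1 := by linarith
  have b1 : coeff 1 (F * F) = 0 := by
    norm_num [coeff_mul, Finset.Nat.sum_antidiagonal_eq_sum_range_succ_mk,
      Finset.sum_range_succ, a0, a1]
  have c1 : coeff 1 (F * (F * F)) = 0 := by
    norm_num [coeff_mul (n := 1) (φ := F) (ψ := F * F),
      Finset.Nat.sum_antidiagonal_eq_sum_range_succ_mk,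
      Finset.sum_range_succ, a0, a1, b0, b1]
  have e2 := congrArg (coeff 2) hF
  simp only [map_add, map_sub, coeff_C_mul, coeff_X_pow_mul', coeff_X_pow, h0] at e2
  norm_num [a0, a1, b0, b1, h0] at e2
  have a2 : coeff 2 F = 2 := by linarith
  have b2 : coeff 2 (F * F) = 1 := by
    norm_num [coeff_mul, Finset.Nat.sum_antidiagonal_eq_sum_range_succ_mk,
      Finset.sum_range_succ, a0, a1, a2]
  have c2 : coeff 2 (F * (F * F)) = 0 := by
    norm_num [coeff_mul (n := 2) (φ := F) (ψ := F * F),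
      Finset.Nat.sum_antidiagonal_eq_sum_range_succ_mk,
      Finset.sum_range_succ, a0, a1, a2, b0, b1, b2]
  have e3 := congrArg (coeff 3) hF
  simp only [map_add, map_sub, coeff_C_mul, coeff_X_pow_mul', coeff_X_pow, h0] at e3
  norm_num [a0, a1, a2, b0, b1, b2, h0] at e3
  have a3 : coeff 3 F = 6 := by linarith
  have b3 : coeff 3 (F * F) = 4 := by
    norm_num [coeff_mul, Finset.Nat.sum_antidiagonal_eq_sum_range_succ_mk,
      Finset.sum_range_succ, a0, a1, a2, a3]
  have c3 : coeff 3 (F * (F * F)) = 1 := by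
    norm_num [coeff_mul (n := 3) (φ := F) (ψ := F * F),
      Finset.Nat.sum_antidiagonal_eq_sum_range_succ_mk,
      Finset.sum_range_succ, a0, a1, a2, a3, b0, b1, b2, b3]
  have e4 := congrArg (coeff 4) hF
  simp only [map_add, map_sub, coeff_C_mul, coeff_X_pow_mul', coeff_X_pow, h0] at e4
  norm_num [a0, a1, a2, a3, b0, b1, b2, b3, c1, h0] at e4
  have a4 : coeff 4 F = 22 := by linarith
  have b4 : coeff 4 (F * F) = 16 := by
    norm_num [coeff_mul, Finset.Nat.sum_antidiagonal_eq_sum_range_succ_mk,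
      Finset.sum_range_succ, a0, a1, a2, a3, a4]
  have c4 : coeff 4 (F * (F * F)) = 6 := by
    norm_num [coeff_mul (n := 4) (φ := F) (ψ := F * F),
      Finset.Nat.sum_antidiagonal_eq_sum_range_succ_mk,
      Finset.sum_range_succ, a0, a1, a2, a3, a4, b0, b1, b2, b3, b4]
  have e5 := congrArg (coeff 5) hF
  simp only [map_add, map_sub, coeff_C_mul, coeff_X_pow_mul', coeff_X_pow, h0] at e5
  norm_num [a0, a1, a2, a3, a4, b0, b1, b2, b3, b4, c2, h0] at e5
  have a5 : coeff 5 F = 88 := by linarith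
  have b5 : coeff 5 (F * F) = 68 := by
    norm_num [coeff_mul, Finset.Nat.sum_antidiagonal_eq_sum_range_succ_mk,
      Finset.sum_range_succ, a0, a1, a2, a3, a4, a5]
  have c5 : coeff 5 (F * (F * F)) = 30 := by
    norm_num [coeff_mul (n := 5) (φ := F) (ψ := F * F),
      Finset.Nat.sum_antidiagonal_eq_sum_range_succ_mk,
      Finset.sum_range_succ, a0, a1, a2, a3, a4, a5, b0, b1, b2, b3, b4, b5]
  have e6 := congrArg (coeff 6) hF
  simp only [map_add, map_sub, coeff_C_mul, coeff_X_pow_mul', coeff_X_pow, h0] at e6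
  norm_num [a0, a1, a2, a3, a4, a5, b0, b1, b2, b3, b4, b5, c3, h0] at e6
  have a6 : coeff 6 F = 367 := by linarith
  have b6 : coeff 6 (F * F) = 300 := by
    norm_num [coeff_mul, Finset.Nat.sum_antidiagonal_eq_sum_range_succ_mk,
      Finset.sum_range_succ, a0, a1, a2, a3, a4, a5, a6]
  have c6 : coeff 6 (F * (F * F)) = 146 := by
    norm_num [coeff_mul (n := 6) (φ := F) (ψ := F * F),
      Finset.Nat.sum_antidiagonal_eq_sum_range_succ_mk,
      Finset.sum_range_succ, a0, a1, a2, a3, a4, a5, a6, b0, b1, b2, b3, b4, b5, b6]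
  have e7 := congrArg (coeff 7) hF
  simp only [map_add, map_sub, coeff_C_mul, coeff_X_pow_mul', coeff_X_pow, h0] at e7
  norm_num [a0, a1, a2, a3, a4, a5, a6, b0, b1, b2, b3, b4, b5, b6, c4, h0] at e7
  have a7 : coeff 7 F = 1571 := by linarith
  have b7 : coeff 7 (F * F) = 1350 := by
    norm_num [coeff_mul, Finset.Nat.sum_antidiagonal_eq_sum_range_succ_mk,
      Finset.sum_range_succ, a0, a1, a2, a3, a4, a5, a6, a7]
  have c7 : coeff 7 (F * (F * F)) = 708 := by
    norm_num [coeff_mul (n := 7) (φ := F) (ψ := F * F),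
      Finset.Nat.sum_antidiagonal_eq_sum_range_succ_mk,
      Finset.sum_range_succ, a0, a1, a2, a3, a4, a5, a6, a7, b0, b1, b2, b3, b4, b5, b6, b7]
  have e8 := congrArg (coeff 8) hF
  simp only [map_add, map_sub, coeff_C_mul, coeff_X_pow_mul', coeff_X_pow, h0] at e8
  norm_num [a0, a1, a2, a3, a4, a5, a6, a7, b0, b1, b2, b3, b4, b5, b6, b7, c5, h0] at e8
  have a8 : coeff 8 F = 6861 := by linarith
  have b8 : coeff 8 (F * F) = 6150 := by
    norm_num [coeff_mul, Finset.Nat.sum_antidiagonal_eq_sum_range_succ_mk,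
      Finset.sum_range_succ, a0, a1, a2, a3, a4, a5, a6, a7, a8]
  have c8 : coeff 8 (F * (F * F)) = 3429 := by
    norm_num [coeff_mul (n := 8) (φ := F) (ψ := F * F),
      Finset.Nat.sum_antidiagonal_eq_sum_range_succ_mk,
      Finset.sum_range_succ, a0, a1, a2, a3, a4, a5, a6, a7, a8, b0, b1, b2, b3, b4, b5, b6, b7, b8]
  have e9 := congrArg (coeff 9) hF
  simp only [map_add, map_sub, coeff_C_mul, coeff_X_pow_mul', coeff_X_pow, h0] at e9
  norm_num [a0, a1, a2, a3, a4, a5, a6, a7, a8, b0, b1, b2, b3, b4, b5, b6, b7, b8, c6, h0] at e9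
  have a9 : coeff 9 F = 30468 := by linarith
  have b9 : coeff 9 (F * F) = 28282 := by
    norm_num [coeff_mul, Finset.Nat.sum_antidiagonal_eq_sum_range_succ_mk,
      Finset.sum_range_succ, a0, a1, a2, a3, a4, a5, a6, a7, a8, a9]
  have c9 : coeff 9 (F * (F * F)) = 16593 := by
    norm_num [coeff_mul (n := 9) (φ := F) (ψ := F * F),
      Finset.Nat.sum_antidiagonal_eq_sum_range_succ_mk,
      Finset.sum_range_succ, a0, a1, a2, a3, a4, a5, a6, a7, a8, a9, b0, b1, b2, b3, b4, b5, b6, b7, b8, b9]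
  have e10 := congrArg (coeff 10) hF
  simp only [map_add, map_sub, coeff_C_mul, coeff_X_pow_mul', coeff_X_pow, h0] at e10
  norm_num [a0, a1, a2, a3, a4, a5, a6, a7, a8, a9, b0, b1, b2, b3, b4, b5, b6, b7, b8, b9, c7, h0] at e10
  have a10 : coeff 10 F = 137229 := by linarith
  have b10 : coeff 10 (F * F) = 131124 := by
    norm_num [coeff_mul, Finset.Nat.sum_antidiagonal_eq_sum_range_succ_mk,
      Finset.sum_range_succ, a0, a1, a2, a3, a4, a5, a6, a7, a8, a9, a10]
  have e11 := congrArg (coeff 11) hF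
  simp only [map_add, map_sub, coeff_C_mul, coeff_X_pow_mul', coeff_X_pow, h0] at e11
  norm_num [a0, a1, a2, a3, a4, a5, a6, a7, a8, a9, a10, b0, b1, b2, b3, b4, b5, b6, b7, b8, b9, b10, c8, h0] at e11
  have a11 : coeff 11 F = 625573 := by linarith
  have b11 : coeff 11 (F * F) = 612378 := by
    norm_num [coeff_mul, Finset.Nat.sum_antidiagonal_eq_sum_range_succ_mk,
      Finset.sum_range_succ, a0, a1, a2, a3, a4, a5, a6, a7, a8, a9, a10, a11]
  have e12 := congrArg (coeff 12) hF
  simp only [map_add, map_sub, coeff_C_mul, coeff_X_pow_mul', coeff_X_pow, h0] at e12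
  norm_num [a0, a1, a2, a3, a4, a5, a6, a7, a8, a9, a10, a11, b0, b1, b2, b3, b4, b5, b6, b7, b8, b9, b10, b11, c9, h0] at e12
  have a12 : coeff 12 F = 2881230 := by linarith
  exact ⟨a1, a2, a3, a4, a5, a6, a7, a8, a9, a10, a11, a12⟩
end

section
/- The quintic polynomial 2 - 41z + 101z² - 97z³ + 36z⁴ - 4z⁵ has a real root strictly between 5.19 and 5.20, and this is its greatest real root. -/
theorem quintic_greatest_real_root :
    ∃ x : ℝ, (5.19 < x ∧ x < 5.20) ∧
      2 - 41*x + 101*x^2 - 97*x^3 + 36*x^4 - 4*x^5 = 0 ∧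
      ∀ y : ℝ, 2 - 41*y + 101*y^2 - 97*y^3 + 36*y^4 - 4*y^5 = 0 → y ≤ x := by
  set f : ℝ → ℝ := fun x => 2 - 41*x + 101*x^2 - 97*x^3 + 36*x^4 - 4*x^5 with hf
  have hcont : Continuous f := by fun_prop
  have h519 : 0 < f 5.19 := by norm_num [hf]
  have h52 : f 5.2 < 0 := by norm_num [hf]
  have hneg : ∀ y : ℝ, (5.2:ℝ) ≤ y → f y < 0 := by
    intro y hy
    have ht : (0:ℝ) ≤ y - 5.2 := by linarith
    simp only [hf]
    nlinarith [pow_nonneg ht 2, pow_nonneg ht 3, pow_nonneg ht 4, pow_nonneg ht 5,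
      mul_nonneg (pow_nonneg ht 4) ht]
  -- IVT root in (5.19, 5.2)
  have hsub : Set.Icc (f 5.2) (f 5.19) ⊆ f '' Set.Icc (5.19:ℝ) 5.2 :=
    intermediate_value_Icc' (by norm_num) hcont.continuousOn
  obtain ⟨z, hz, hz0⟩ := hsub ⟨le_of_lt h52, le_of_lt h519⟩
  -- the set of roots ≤ 5.2
  set S : Set ℝ := {y | f y = 0} ∩ Set.Iic (5.2:ℝ) with hS
  have hzS : z ∈ S := ⟨hz0, hz.2⟩
  have hSc : IsClosed S := (isClosed_singleton.preimage hcont).inter isClosed_Iic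
  have hSb : BddAbove S := ⟨5.2, fun y hy => hy.2⟩
  have hxS : sSup S ∈ S := hSc.csSup_mem ⟨z, hzS⟩ hSb
  refine ⟨sSup S, ⟨?_, ?_⟩, hxS.1, ?_⟩
  · have hz19 : 5.19 < z := by
      rcases lt_or_eq_of_le hz.1 with h | h
      · exact h
      · exact absurd hz0 (by rw [← h]; exact ne_of_gt h519)
    exact lt_of_lt_of_le hz19 (le_csSup hSb hzS)
  · rcases lt_or_eq_of_le (Set.mem_Iic.mp hxS.2) with h | h
    · have h520 : (5.2:ℝ) = 5.20 := by norm_num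
      rw [← h520]; exact h
    · exact absurd hxS.1 (by rw [h]; exact ne_of_lt h52)
  · intro y hy
    by_cases hy52 : y ≤ 5.2
    · exact le_csSup hSb ⟨hy, hy52⟩
    · exact absurd hy (ne_of_lt (hneg y (le_of_lt (not_le.1 hy52))))
end

section
/- The rational function S(z,u) = z(1-2z)/(1-(2+u)z + u z²) satisfies S(z,u) = z / (1 - u·U(z)) where U(z) = z(1-z)/(1-2z), reflecting the decomposition of a source graph as a root together with a sequence of u-trees. -/
theorem source_graph_gf_decomposition (z u : ℝ) (hz : z ≠ 1/2)
    (hden : 1 - (2 + u) * z + u * z^2 ≠ 0) :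
    z * (1 - 2*z) / (1 - (2 + u) * z + u * z^2) =
      z / (1 - u * (z * (1 - z) / (1 - 2*z))) := by
  have h2 : 1 - 2*z ≠ 0 := by intro h; apply hz; linarith
  have key : 1 - u * (z * (1 - z) / (1 - 2*z)) =
      (1 - (2 + u) * z + u * z^2) / (1 - 2*z) := by
    have hD : (z * (1 - z) / (1 - 2*z)) * (1 - 2*z) = z * (1 - z) := div_mul_cancel₀ _ h2
    rw [eq_div_iff h2]; linear_combination (-u) * hD
  rw [key, div_div_eq_mul_div, mul_comm]
end

section
/- The rational function S_P(z,u) = u z²(1-2z) / ((1-z)(1-(2+u)z + u z²)) satisfies S_P(z,u) = z · (1/(1 - u·U(z))) · (u·z/(1-z)) where U(z) = z(1-z)/(1-2z), reflecting the decomposition S_P = Z × Seq(u·U) × u·Seq⁺(Z). -/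
theorem source_graph_path_gf_decomposition (z u : ℝ) (hz1 : z ≠ 1) (hz2 : z ≠ 1/2)
    (hden : 1 - (2 + u) * z + u * z^2 ≠ 0) :
    u * z^2 * (1 - 2*z) / ((1 - z) * (1 - (2 + u) * z + u * z^2)) =
      z * (1 / (1 - u * (z * (1 - z) / (1 - 2*z)))) * (u * z / (1 - z)) := by
  have h2 : (1 : ℝ) - 2*z ≠ 0 := by intro h; apply hz2; linarith
  have h1 : (1 : ℝ) - z ≠ 0 := by intro h; apply hz1; linarith
  have key : 1 - u * (z * (1 - z) / (1 - 2*z)) = (1 - (2 + u) * z + u * z^2) / (1 - 2*z) := by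
    rw [eq_div_iff h2, sub_mul, mul_div_assoc', div_mul_cancel₀ _ h2]; ring
  rw [key]
  field_simp
end
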